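/- Let 0 < h ≤ 1, 0 ≤ α ≤ 1, t ∈ ℝ, and let k, k₁, k₂, k₃ be integers with |k₁|, |k₂|, |k₃| ≤ π/h, k = k₁+k₂+k₃, 0 < |k| ≤ π/h, k₁k₂k₃ ≠ 0, and (k₁+k₂)(k₂+k₃)(k₁+k₃) ≠ 0. Define 𝓜_h^{3,±}(t,k,k₁,k₂,k₃) = (2/(k₁·Ψ³(k,k₁,k₂,k₃)))·e^{±itΨ³(k,k₁,k₂,k₃)} − (2·sin²(hk/2)·cos(hk/4)·cos(h(k₂+k₃)/4)/(h·k²·sin(hk₁/4)·Φ_h³(k,k₁,k₂,k₃)))·e^{±itΦ_h³(k,k₁,k₂,k₃)}. Then there is an absolute constant C (independent of h, t, α and the frequencies) such that |𝓜_h^{3,±}(t,k,k₁,k₂,k₃)| ≤ C·h^α·(1+|t|)^α·(max(|k|,|k₁|,|k₂|,|k₃|))^{2α}/(|k₁|·max(|k₁|,|k₂|,|k₃|)) (for either choice of sign). -/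

import Mathlib

open scoped Real BigOperators ENNReal NNReal
open MeasureTheory

noncomputable section

namespace FPU

/-- `e^{ix}`. -/
def eI (x : ℝ) : ℂ := Complex.exp (Complex.I * x)

/-- Mesh size `h = π / N`. -/
def msh (N : ℕ) : ℝ := Real.pi / N

/-- Frequency/index set `{-N, …, N-1}` of `𝕋_h` (identified with `(𝕋_h)*`). -/
def dual (N : ℕ) : Finset ℤ := Finset.Icc (-(N : ℤ)) ((N : ℤ) - 1)

/-- Reduction of an integer into `{-N, …, N-1}` modulo `2N`. -/
def red (N : ℕ) (m : ℤ) : ℤ := (m + N) % (2 * N) - N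

/-- Complexification of a real lattice function. -/
def cf (f : ℤ → ℝ) : ℤ → ℂ := fun n => (f n : ℂ)

/-- Discrete Fourier coefficient `𝓕_h f (k)` on `𝕋_h`. -/
def dF (N : ℕ) (f : ℤ → ℂ) (k : ℤ) : ℂ :=
  ((msh N / Real.sqrt (2 * Real.pi) : ℝ) : ℂ) *
    ∑ n ∈ dual N, f n * eI (-(msh N * n * k))

/-- `L²(𝕋_h)` norm. -/
def L2h (N : ℕ) (f : ℤ → ℂ) : ℝ :=
  Real.sqrt (msh N * ∑ n ∈ dual N, ‖f n‖ ^ 2)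

/-- `H^s(𝕋_h)` norm. -/
def Hs (N : ℕ) (s : ℝ) (f : ℤ → ℂ) : ℝ :=
  Real.sqrt (∑ k ∈ dual N, (1 + (k : ℝ) ^ 2) ^ s * ‖dF N f k‖ ^ 2)

/-- `ℍ^s(𝕋_h)` norm of a pair. -/
def HsPair (N : ℕ) (s : ℝ) (f g : ℤ → ℂ) : ℝ :=
  Real.sqrt (Hs N s f ^ 2 + Hs N s g ^ 2)

/-- Fourier multiplier on `𝕋_h` with symbol `m`. -/
def mult (N : ℕ) (m : ℤ → ℂ) (f : ℤ → ℂ) : ℤ → ℂ := fun n =>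
  ((1 / Real.sqrt (2 * Real.pi) : ℝ) : ℂ) *
    ∑ k ∈ dual N, m k * dF N f k * eI (msh N * n * k)

/-- Symbol of `∇_h`. -/
def gradSymb (N : ℕ) (k : ℤ) : ℂ :=
  2 * Complex.I / ((msh N : ℝ) : ℂ) * ((Real.sin (msh N * k / 2) : ℝ) : ℂ)

/-- `∇_h`. -/
def gradh (N : ℕ) : (ℤ → ℂ) → ℤ → ℂ := mult N (gradSymb N)

/-- `∇_h⁻¹` (vanishing at frequency `0`). -/
def gradhInv (N : ℕ) : (ℤ → ℂ) → ℤ → ℂ :=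
  mult N fun k => if k = 0 then 0 else (gradSymb N k)⁻¹

/-- The FPU dispersion `s_h(k) = (1/h²)(k - (2/h)sin(hk/2))`. -/
def sh (N : ℕ) (k : ℤ) : ℝ :=
  (1 / msh N ^ 2) * (k - (2 / msh N) * Real.sin (msh N * k / 2))

/-- Linear FPU propagator `S_h^σ(t)`, the multiplier with symbol `e^{iσt·s_h(k)}`. -/
def Sh (N : ℕ) (σ t : ℝ) : (ℤ → ℂ) → ℤ → ℂ :=
  mult N fun k => eI (σ * t * sh N k)

/-- `e^{σc∂_h}`, the multiplier with symbol `e^{iσck}`. -/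
def expDh (N : ℕ) (c : ℝ) : (ℤ → ℂ) → ℤ → ℂ :=
  mult N fun k => eI (c * k)

/-- Coupled FPU integral equation (component with sign `σ`, the other component is `w`). -/
def coupledEq (N : ℕ) (σ T : ℝ) (u0 : ℤ → ℂ) (u w : ℝ → ℤ → ℂ) : Prop :=
  ∀ t ∈ Set.Icc (-T) T, ∀ n : ℤ,
    u t n = Sh N σ t u0 n - (σ : ℂ) / 4 *
      ∫ t' in (0:ℝ)..t,
        Sh N σ (t - t')
          (gradh N (fun m =>
            (u t' m + expDh N (σ * (2 * t' / msh N ^ 2)) (w t') m) ^ 2)) n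

/-- Decoupled FPU integral equation with sign `σ`. -/
def decoupledEq (N : ℕ) (σ T : ℝ) (u0 : ℤ → ℂ) (v : ℝ → ℤ → ℂ) : Prop :=
  ∀ t ∈ Set.Icc (-T) T, ∀ n : ℤ,
    v t n = Sh N σ t u0 n - (σ : ℂ) / 4 *
      ∫ t' in (0:ℝ)..t, Sh N σ (t - t') (gradh N (fun m => (v t' m) ^ 2)) n

/-- Fourier coefficient on `𝕋 = ℝ/2πℤ`. -/
def tF (f : ℝ → ℂ) (k : ℤ) : ℂ :=
  ((1 / Real.sqrt (2 * Real.pi) : ℝ) : ℂ) *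
    ∫ x in (-Real.pi)..Real.pi, f x * eI (-(x * k))

/-- Fourier multiplier on `𝕋`. -/
def tmult (m : ℤ → ℂ) (f : ℝ → ℂ) : ℝ → ℂ := fun x =>
  ((1 / Real.sqrt (2 * Real.pi) : ℝ) : ℂ) * ∑' k : ℤ, m k * tF f k * eI (x * k)

/-- Airy propagator `S^σ(t)`, multiplier with symbol `e^{iσtk³/24}`. -/
def airy (σ t : ℝ) : (ℝ → ℂ) → ℝ → ℂ :=
  tmult fun k => eI (σ * t * (k : ℝ) ^ 3 / 24)

/-- `∂_x` as a Fourier multiplier on `𝕋`. -/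
def tderiv : (ℝ → ℂ) → ℝ → ℂ := tmult fun k => Complex.I * (k : ℂ)

/-- `L²(𝕋)` norm (computed on the Fourier side). -/
def L2T (f : ℝ → ℂ) : ℝ≥0∞ :=
  (∑' k : ℤ, ENNReal.ofReal (‖tF f k‖ ^ 2)) ^ (1/2 : ℝ)

/-- `H^s(𝕋)` norm. -/
def HsT (s : ℝ) (f : ℝ → ℂ) : ℝ≥0∞ :=
  (∑' k : ℤ, ENNReal.ofReal ((1 + (k : ℝ) ^ 2) ^ s * ‖tF f k‖ ^ 2)) ^ (1/2 : ℝ)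

/-- `L²(𝕋)` norm of the sharp frequency projection onto the set `K`. -/
def L2Tproj (K : Set ℤ) (f : ℝ → ℂ) : ℝ≥0∞ :=
  (∑' k : ℤ, ENNReal.ofReal (K.indicator (fun j => ‖tF f j‖ ^ 2) k)) ^ (1/2 : ℝ)

/-- Linear interpolation `𝓛_h` of a lattice function, as a function on `𝕋` (2π-periodic). -/
def interp (N : ℕ) (f : ℤ → ℂ) : ℝ → ℂ := fun x =>
  f (red N ⌊x / msh N⌋) +
    (f (red N (⌊x / msh N⌋ + 1)) - f (red N ⌊x / msh N⌋)) *
      (((x - msh N * ⌊x / msh N⌋) / msh N : ℝ) : ℂ)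

/-- KdV integral equation with sign `σ`. -/
def kdvEq (σ T : ℝ) (w0 : ℝ → ℂ) (w : ℝ → ℝ → ℂ) : Prop :=
  ∀ t ∈ Set.Icc (-T) T, ∀ x : ℝ,
    w t x = airy σ t w0 x - (σ : ℂ) / 4 *
      ∫ t' in (0:ℝ)..t, airy σ (t - t') (tderiv (fun y => (w t' y) ^ 2)) x

/-- Continuity in `H^s(𝕋)` on `[-T,T]`, together with membership in `H^s`. -/
def contHsT (s T : ℝ) (w : ℝ → ℝ → ℂ) : Prop :=
  ∀ t₀ ∈ Set.Icc (-T) T, HsT s (w t₀) < ⊤ ∧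
    ∀ ε : ℝ, 0 < ε → ∃ δ : ℝ, 0 < δ ∧ ∀ t ∈ Set.Icc (-T) T,
      |t - t₀| < δ → HsT s (fun x => w t x - w t₀ x) < ENNReal.ofReal ε

/-- Japanese bracket `⟨x⟩`. -/
def jap (x : ℝ) : ℝ := Real.sqrt (1 + x ^ 2)

/-- Space-time Fourier transform on `ℝ × 𝕋_h`. -/
def stF (N : ℕ) (u : ℝ → ℤ → ℂ) (τ : ℝ) (k : ℤ) : ℂ :=
  ((msh N / (2 * Real.pi) : ℝ) : ℂ) *
    ∑ n ∈ dual N, ∫ t : ℝ, eI (-(t * τ)) * eI (-(msh N * n * k)) * u t n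

/-- Bourgain norm `X^{s,b}_{h,σ}` (with sign `σ = ±1`). -/
def Xnorm (N : ℕ) (σ s b : ℝ) (u : ℝ → ℤ → ℂ) : ℝ≥0∞ :=
  (∑ k ∈ dual N, ∫⁻ τ : ℝ, ENNReal.ofReal
      (jap (k : ℝ) ^ (2 * s) * jap (τ - σ * sh N k) ^ (2 * b) * ‖stF N u τ k‖ ^ 2)) ^ (1/2 : ℝ)

/-- `Z^s_{h,σ}` norm. -/
def Znorm (N : ℕ) (σ s : ℝ) (u : ℝ → ℤ → ℂ) : ℝ≥0∞ :=
  Xnorm N σ s (-(1/2)) u +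
    (∑ k ∈ dual N, (∫⁻ τ : ℝ, ENNReal.ofReal
        (jap (k : ℝ) ^ s * (jap (τ - σ * sh N k))⁻¹ * ‖stF N u τ k‖)) ^ 2) ^ (1/2 : ℝ)

/-- `Y^s_{h,σ}` norm. -/
def Ynorm (N : ℕ) (σ s : ℝ) (u : ℝ → ℤ → ℂ) : ℝ≥0∞ :=
  Xnorm N σ s (1/2) u +
    (∑ k ∈ dual N, (∫⁻ τ : ℝ, ENNReal.ofReal
        (jap (k : ℝ) ^ s * ‖stF N u τ k‖)) ^ 2) ^ (1/2 : ℝ)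

/-- Time restricted norm `Y^{s,T}_{h,σ}` (infimum over extensions). -/
def YnormT (N : ℕ) (σ s T : ℝ) (u : ℝ → ℤ → ℂ) : ℝ≥0∞ :=
  ⨅ g : {g : ℝ → ℤ → ℂ // ∀ t ∈ Set.Icc (-T) T, ∀ n : ℤ, g t n = u t n},
    Ynorm N σ s g.1

/-- `L⁴(ℝ × 𝕋_h)` norm. -/
def L4st (N : ℕ) (u : ℝ → ℤ → ℂ) : ℝ≥0∞ :=
  (∫⁻ t : ℝ, ENNReal.ofReal (msh N * ∑ n ∈ dual N, ‖u t n‖ ^ 4)) ^ (1/4 : ℝ)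

/-- KdV resonance `Ψ²(k,k₁,k₂) = -(1/8)kk₁k₂`. -/
def Psi2 (k k₁ k₂ : ℤ) : ℝ := -(1/8 : ℝ) * (k : ℝ) * (k₁ : ℝ) * (k₂ : ℝ)

/-- KdV cubic resonance `Ψ³ = -(1/8)(a+b)(b+c)(a+c)`. -/
def Psi3 (a b c : ℤ) : ℝ :=
  -(1/8 : ℝ) * (((a + b : ℤ) : ℝ) * ((b + c : ℤ) : ℝ) * ((a + c : ℤ) : ℝ))

/-- KdV quartic resonance. -/
def Psi4 (k₁ k₂ k₃ k₄ : ℤ) : ℝ := Psi3 (k₁ + k₂) k₃ k₄ + Psi2 (k₁ + k₂) k₁ k₂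

/-- FPU resonance `Φ_h²`. -/
def Phi2 (h : ℝ) (k k₁ k₂ : ℤ) : ℝ :=
  -(8 / h ^ 3) *
    (Real.sin (h * k₁ / 4) * Real.sin (h * k₂ / 4) * Real.sin (h * k / 4))

/-- FPU cubic resonance `Φ_h³`. -/
def Phi3 (h : ℝ) (a b c : ℤ) : ℝ :=
  -(8 / h ^ 3) *
    (Real.sin (h * (a + b) / 4) * Real.sin (h * (b + c) / 4) * Real.sin (h * (a + c) / 4))

/-- FPU quartic resonance `Φ_h⁴`. -/
def Phi4 (h : ℝ) (k₁ k₂ k₃ k₄ : ℤ) : ℝ :=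
  Phi3 h (k₁ + k₂) k₃ k₄ + Phi2 h (k₁ + k₂) k₁ k₂

/-- Decoupled FPU profile equation in Fourier variables (sign `σ`), on the time set `I`. -/
def fpuProfileEq (N : ℕ) (σ : ℝ) (u0 : ℤ → ℂ) (V : ℝ → ℤ → ℂ) (I : Set ℝ) : Prop :=
  ∀ t ∈ I, ∀ k ∈ dual N,
    dF N (V t) k = dF N u0 k -
      (σ : ℂ) * Complex.I / (2 * ((msh N : ℝ) : ℂ)) * ((Real.sin (msh N * k / 2) : ℝ) : ℂ) *
        ∫ t' in (0:ℝ)..t,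
          ∑ k₁ ∈ dual N,
            (if k₁ ≠ 0 ∧ k - k₁ ≠ 0 ∧ k - k₁ ∈ dual N then
              eI (σ * t' * Phi2 (msh N) k k₁ (k - k₁)) * dF N (V t') k₁ * dF N (V t') (k - k₁)
            else 0)

/-- KdV profile equation in Fourier variables (sign `σ`), on the time set `I`;
`W t k` denotes the `k`-th Fourier coefficient of the profile at time `t`. -/
def kdvProfileEq (σ : ℝ) (w0 : ℤ → ℂ) (W : ℝ → ℤ → ℂ) (I : Set ℝ) : Prop :=
  ∀ t ∈ I, ∀ k : ℤ,
    W t k = w0 k -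
      (σ : ℂ) * Complex.I * (k : ℂ) / 4 *
        ∫ t' in (0:ℝ)..t,
          ∑' k₁ : ℤ,
            (if k₁ ≠ 0 ∧ k - k₁ ≠ 0 then
              eI (σ * t' * Psi2 k k₁ (k - k₁)) * W t' k₁ * W t' (k - k₁)
            else 0)

/-- `H^s(𝕋)` norm of a Fourier coefficient sequence (extended-real valued). -/
def HsSeq (s : ℝ) (a : ℤ → ℂ) : ℝ≥0∞ :=
  (∑' k : ℤ, ENNReal.ofReal ((1 + (k : ℝ) ^ 2) ^ s * ‖a k‖ ^ 2)) ^ (1/2 : ℝ)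

/-- `H^s(𝕋)` norm of a Fourier coefficient sequence (real valued). -/
def HsSeqR (s : ℝ) (a : ℤ → ℂ) : ℝ :=
  Real.sqrt (∑' k : ℤ, (1 + (k : ℝ) ^ 2) ^ s * ‖a k‖ ^ 2)

/-- `ℓ²(ℤ)` norm of a Fourier coefficient sequence. -/
def l2R (a : ℤ → ℂ) : ℝ := Real.sqrt (∑' k : ℤ, ‖a k‖ ^ 2)

/-- `ℓ²` norm of the projection of a coefficient sequence to the frequency set `K`. -/
def l2projR (K : Set ℤ) (a : ℤ → ℂ) : ℝ :=
  Real.sqrt (∑' k : ℤ, K.indicator (fun j => ‖a j‖ ^ 2) k)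

/-- Periodic discrete Laplacian `Δ_h` on real lattice functions. -/
def lapR (N : ℕ) (f : ℤ → ℝ) (n : ℤ) : ℝ :=
  (f (red N (n + 1)) + f (red N (n - 1)) - 2 * f n) / msh N ^ 2

lemma sin_ge_sub_cube' {x : ℝ} (hx : 0 ≤ x) : x - x ^ 3 / 6 ≤ Real.sin x := by
  have mono : MonotoneOn (fun y : ℝ => Real.sin y - (y - y ^ 3 / 6)) (Set.Ici 0) := by
    refine monotoneOn_of_deriv_nonneg (convex_Ici 0) (by fun_prop) ?_ ?_
    · exact ((by fun_prop : Differentiable ℝ (fun y : ℝ => Real.sin y - (y - y ^ 3 / 6)))).differentiableOn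
    · intro y _
      have hd : HasDerivAt (fun y : ℝ => Real.sin y - (y - y ^ 3 / 6))
          (Real.cos y - (1 - y ^ 2 / 2)) y := by
        have h2 : HasDerivAt (fun y : ℝ => y - y ^ 3 / 6) (1 - y ^ 2 / 2) y := by
          have h3 := (hasDerivAt_pow 3 y).div_const 6
          have h4 := (hasDerivAt_id' y).sub h3
          refine h4.congr_deriv ?_
          push_cast; ring
        exact (Real.hasDerivAt_sin y).sub h2
      rw [hd.deriv]
      have := Real.one_sub_sq_div_two_le_cos (x := y)
      linarith
  have := mono (Set.self_mem_Ici) (Set.mem_Ici.mpr hx) hx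
  simp only [Real.sin_zero] at this
  linarith

lemma abs_sin_sub_le' (x : ℝ) : |Real.sin x - x| ≤ |x| ^ 3 / 6 := by
  rcases le_or_gt 0 x with hx | hx
  · have h1 := sin_ge_sub_cube' hx
    have h2 := Real.sin_le hx
    rw [abs_of_nonneg hx, abs_le]
    constructor <;> nlinarith
  · have hx' : (0:ℝ) ≤ -x := by linarith
    have h1 := sin_ge_sub_cube' hx'
    have h2 := Real.sin_le hx'
    rw [Real.sin_neg] at h1 h2
    rw [abs_of_neg hx, abs_le]
    constructor <;> nlinarith

lemma inv_sinc_aux {u : ℝ} (hu : 0 < u) (h2 : u ≤ π / 2) : |u / Real.sin u - 1| ≤ u ^ 2 := by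
  have hπ := Real.pi_pos
  have hsl : 2 / π * u ≤ Real.sin u := Real.mul_le_sin hu.le h2
  have hs0 : 0 < Real.sin u := lt_of_lt_of_le (by positivity) hsl
  have hle : Real.sin u ≤ u := Real.sin_le hu.le
  have hge : u - u ^ 3 / 6 ≤ Real.sin u := sin_ge_sub_cube' hu.le
  have h1 : 1 ≤ u / Real.sin u := (one_le_div hs0).mpr hle
  rw [abs_of_nonneg (by linarith)]
  rw [div_sub_one hs0.ne', div_le_iff₀ hs0]
  have hkey : u ^ 3 / 6 ≤ u ^ 2 * Real.sin u := by
    have h4 : u ^ 2 * (2 / π * u) ≤ u ^ 2 * Real.sin u :=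
      mul_le_mul_of_nonneg_left hsl (sq_nonneg u)
    have h5 : (1:ℝ) / 2 ≤ 2 / π := by
      rw [div_le_div_iff₀ (by norm_num) hπ]
      linarith [Real.pi_le_four]
    nlinarith [pow_nonneg hu.le 3]
  linarith

lemma inv_sinc {u : ℝ} (hu : u ≠ 0) (h2 : |u| ≤ π / 2) : |u / Real.sin u - 1| ≤ u ^ 2 := by
  rcases hu.lt_or_gt with h | h
  · have := inv_sinc_aux (u := -u) (by linarith) (by rw [abs_of_neg h] at h2; linarith)
    rw [Real.sin_neg, neg_div_neg_eq] at this
    simpa using this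
  · exact inv_sinc_aux h (by rwa [abs_of_pos h] at h2)

lemma sinc_sq_aux {u : ℝ} (hu : 0 < u) (h2 : u ≤ π / 2) :
    |(Real.sin u / u) ^ 2 - 1| ≤ u ^ 2 := by
  have hπ := Real.pi_pos
  have hsl : 2 / π * u ≤ Real.sin u := Real.mul_le_sin hu.le h2
  have hs0 : 0 < Real.sin u := lt_of_lt_of_le (by positivity) hsl
  have hle : Real.sin u ≤ u := Real.sin_le hu.le
  have hge : u - u ^ 3 / 6 ≤ Real.sin u := sin_ge_sub_cube' hu.le
  have hr1 : Real.sin u / u ≤ 1 := (div_le_one hu).mpr hle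
  have hr0 : 0 ≤ Real.sin u / u := by positivity
  have hr2 : 1 - u ^ 2 / 6 ≤ Real.sin u / u := by
    rw [le_div_iff₀ hu]; nlinarith
  rw [abs_of_nonpos (by nlinarith)]
  nlinarith

lemma sinc_sq {u : ℝ} (hu : u ≠ 0) (h2 : |u| ≤ π / 2) :
    |(Real.sin u / u) ^ 2 - 1| ≤ u ^ 2 := by
  rcases hu.lt_or_gt with h | h
  · have := sinc_sq_aux (u := -u) (by linarith) (by rw [abs_of_neg h] at h2; linarith)
    rw [Real.sin_neg, neg_div_neg_eq] at this
    simpa using this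
  · exact sinc_sq_aux h (by rwa [abs_of_pos h] at h2)

lemma cos_near (u : ℝ) : |Real.cos u - 1| ≤ u ^ 2 := by
  have h1 := Real.one_sub_sq_div_two_le_cos (x := u)
  have h2 := Real.cos_le_one u
  rw [abs_le]
  constructor <;> nlinarith [sq_nonneg u]

lemma mul_near_one {a b da db : ℝ} (ha : |a - 1| ≤ da) (hb : |b - 1| ≤ db)
    (hb' : db ≤ 5 / 2) : |a * b - 1| ≤ 7 / 2 * da + db := by
  have h : a * b - 1 = (a - 1) * (b - 1) + (a - 1) + (b - 1) := by ring
  calc |a * b - 1| = |(a - 1) * (b - 1) + (a - 1) + (b - 1)| := by rw [h]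
    _ ≤ |(a - 1) * (b - 1)| + |a - 1| + |b - 1| := abs_add_three _ _ _
    _ = |a - 1| * |b - 1| + |a - 1| + |b - 1| := by rw [abs_mul]
    _ ≤ 7 / 2 * da + db := by nlinarith [abs_nonneg (a - 1), abs_nonneg (b - 1)]

lemma sin_ne_zero' {u : ℝ} (hu : u ≠ 0) (h2 : |u| ≤ π / 2) : Real.sin u ≠ 0 := by
  have hπ := Real.pi_pos
  have h3 := Real.mul_abs_le_abs_sin h2
  have h4 : 0 < 2 / π * |u| := by positivity
  intro h
  rw [h] at h3
  simp only [abs_zero] at h3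
  linarith

lemma interp_bound {A X Y α : ℝ} (hA : 0 ≤ A) (hAX : A ≤ X) (hAY : A ≤ Y)
    (h0 : 0 ≤ α) (h1 : α ≤ 1) : A ≤ X ^ (1 - α) * Y ^ α := by
  rcases eq_or_lt_of_le hA with h | h
  · rw [← h]
    have hX : 0 ≤ X := le_trans hA hAX
    have hY : 0 ≤ Y := le_trans hA hAY
    positivity
  · have hA' : A = A ^ (1 - α) * A ^ α := by
      rw [← Real.rpow_add h]; simp
    rw [hA']
    exact mul_le_mul (Real.rpow_le_rpow hA hAX (by linarith))
      (Real.rpow_le_rpow hA hAY h0)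
      (by positivity) (Real.rpow_nonneg (le_trans hA hAX) _)

lemma le_mul_mul {a b c : ℝ} (ha : 0 ≤ a) (hb : 1 ≤ b) (hc : 1 ≤ c) : a ≤ a * b * c := by
  calc a = a * 1 := (mul_one a).symm
    _ ≤ a * b := mul_le_mul_of_nonneg_left hb ha
    _ = a * b * 1 := (mul_one _).symm
    _ ≤ a * b * c := mul_le_mul_of_nonneg_left hc (mul_nonneg ha (by linarith))

lemma norm_eI (x : ℝ) : ‖eI x‖ = 1 := by
  rw [eI, mul_comm, Complex.norm_exp_ofReal_mul_I]

lemma norm_eI_sub_one (c : ℝ) : ‖eI c - 1‖ ≤ |c| := by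
  have hrw : eI c - 1 = ((Real.cos c - 1 : ℝ) : ℂ) + ((Real.sin c : ℝ) : ℂ) * Complex.I := by
    rw [eI, mul_comm, Complex.exp_mul_I]
    push_cast [Complex.ofReal_cos, Complex.ofReal_sin]
    ring
  have hsq : ‖eI c - 1‖ ^ 2 = (Real.cos c - 1) ^ 2 + Real.sin c ^ 2 := by
    rw [hrw, Complex.sq_norm, Complex.normSq_add_mul_I]
  have hc := Real.one_sub_sq_div_two_le_cos (x := c)
  have hc1 := Real.cos_le_one c
  have hpyth := Real.sin_sq_add_cos_sq c
  have h2 : ‖eI c - 1‖ ^ 2 ≤ c ^ 2 := by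
    rw [hsq]; nlinarith [sq_nonneg c, sq_nonneg (Real.cos c - 1)]
  have h3 := Real.sqrt_le_sqrt h2
  rwa [Real.sqrt_sq (norm_nonneg _), Real.sqrt_sq_eq_abs] at h3

lemma norm_eI_sub (a b : ℝ) : ‖eI a - eI b‖ ≤ |a - b| := by
  have h1 : eI b * eI (a - b) = eI a := by
    rw [eI, eI, eI, ← Complex.exp_add]
    congr 1
    push_cast
    ring
  calc ‖eI a - eI b‖ = ‖eI b * (eI (a - b) - 1)‖ := by rw [mul_sub, mul_one, h1]
    _ = ‖eI (a - b) - 1‖ := by rw [norm_mul, norm_eI, one_mul]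
    _ ≤ |a - b| := norm_eI_sub_one _

lemma norm_comb0 (m₁ m₂ A B : ℝ) :
    ‖(m₁ : ℂ) * eI A - (m₂ : ℂ) * eI B‖ ≤ |m₁| + |m₂| := by
  calc ‖(m₁ : ℂ) * eI A - (m₂ : ℂ) * eI B‖
      ≤ ‖(m₁ : ℂ) * eI A‖ + ‖(m₂ : ℂ) * eI B‖ := norm_sub_le _ _
    _ = |m₁| + |m₂| := by
        rw [norm_mul, norm_mul, norm_eI, norm_eI, mul_one, mul_one,
          Complex.norm_real, Complex.norm_real, Real.norm_eq_abs, Real.norm_eq_abs]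

lemma norm_comb (m₁ m₂ A B : ℝ) :
    ‖(m₁ : ℂ) * eI A - (m₂ : ℂ) * eI B‖ ≤ |m₁ - m₂| + |m₁| * |A - B| := by
  have hrw : (m₁ : ℂ) * eI A - (m₂ : ℂ) * eI B
      = ((m₁ - m₂ : ℝ) : ℂ) * eI B + (m₁ : ℂ) * (eI A - eI B) := by
    push_cast; ring
  rw [hrw]
  calc ‖((m₁ - m₂ : ℝ) : ℂ) * eI B + (m₁ : ℂ) * (eI A - eI B)‖
      ≤ ‖((m₁ - m₂ : ℝ) : ℂ) * eI B‖ + ‖(m₁ : ℂ) * (eI A - eI B)‖ := norm_add_le _ _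
    _ = |m₁ - m₂| + |m₁| * ‖eI A - eI B‖ := by
        rw [norm_mul, norm_mul, norm_eI, mul_one, Complex.norm_real, Complex.norm_real,
          Real.norm_eq_abs, Real.norm_eq_abs]
    _ ≤ |m₁ - m₂| + |m₁| * |A - B| := by
        gcongr
        exact norm_eI_sub A B

set_option maxHeartbeats 8000000 in
/-- bound for the cubic multiplier `𝓜_h^{3,±}`. -/
theorem M3_bound :
    ∃ C : ℝ, 0 < C ∧ ∀ h : ℝ, 0 < h → h ≤ 1 → ∀ α : ℝ, 0 ≤ α → α ≤ 1 →
      ∀ t σ : ℝ, σ = 1 ∨ σ = -1 →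
      ∀ k k₁ k₂ k₃ : ℤ,
        |(k₁ : ℝ)| ≤ Real.pi / h → |(k₂ : ℝ)| ≤ Real.pi / h → |(k₃ : ℝ)| ≤ Real.pi / h →
        k = k₁ + k₂ + k₃ → k ≠ 0 → |(k : ℝ)| ≤ Real.pi / h →
        k₁ * k₂ * k₃ ≠ 0 → (k₁ + k₂) * (k₂ + k₃) * (k₁ + k₃) ≠ 0 →
        ‖((2 / ((k₁ : ℝ) * Psi3 k₁ k₂ k₃) : ℝ) : ℂ) * eI (σ * t * Psi3 k₁ k₂ k₃) -
            ((2 * Real.sin (h * k / 2) ^ 2 * Real.cos (h * k / 4) *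
                Real.cos (h * (k₂ + k₃) / 4) /
              (h * (k : ℝ) ^ 2 * Real.sin (h * k₁ / 4) * Phi3 h k₁ k₂ k₃) : ℝ) : ℂ) *
              eI (σ * t * Phi3 h k₁ k₂ k₃)‖
          ≤ C * h ^ α * (1 + |t|) ^ α *
              (max |(k : ℝ)| (max |(k₁ : ℝ)| (max |(k₂ : ℝ)| |(k₃ : ℝ)|))) ^ (2 * α) /
              (|(k₁ : ℝ)| * max |(k₁ : ℝ)| (max |(k₂ : ℝ)| |(k₃ : ℝ)|)) := by
  refine ⟨10 ^ 8, by norm_num, ?_⟩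
  intro h hh0 hh1 α hα0 hα1 t σ hσ k k₁ k₂ k₃ hb1 hb2 hb3 hsum hk0 hbk hnz hnz3
  have hπ := Real.pi_pos
  -- nonzero integers
  have hk1 : k₁ ≠ 0 := by rintro rfl; simp at hnz
  have hk2 : k₂ ≠ 0 := by rintro rfl; simp at hnz
  have hk3 : k₃ ≠ 0 := by rintro rfl; simp at hnz
  have hs12 : k₁ + k₂ ≠ 0 := by intro hz; rw [hz] at hnz3; simp at hnz3
  have hs23 : k₂ + k₃ ≠ 0 := by intro hz; rw [hz] at hnz3; simp at hnz3
  have hs13 : k₁ + k₃ ≠ 0 := by intro hz; rw [hz] at hnz3; simp at hnz3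
  have habs : ∀ m : ℤ, m ≠ 0 → (1:ℝ) ≤ |(m:ℝ)| := by
    intro m hm
    rw [← Int.cast_abs]
    exact_mod_cast Int.one_le_abs hm
  have hsum' : (k:ℝ) = (k₁:ℝ) + (k₂:ℝ) + (k₃:ℝ) := by exact_mod_cast hsum
  -- max quantities
  set Km : ℝ := max |(k₁:ℝ)| (max |(k₂:ℝ)| |(k₃:ℝ)|) with hKm
  set K : ℝ := max |(k:ℝ)| Km with hKdef
  clear_value Km K
  have h1k : (1:ℝ) ≤ |(k:ℝ)| := habs k hk0
  have h1k1 : (1:ℝ) ≤ |(k₁:ℝ)| := habs k₁ hk1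
  have hKm1 : (1:ℝ) ≤ Km := by rw [hKm]; exact le_trans h1k1 (le_max_left _ _)
  have hKmK : Km ≤ K := by rw [hKdef]; exact le_max_right _ _
  have hK1 : (1:ℝ) ≤ K := le_trans hKm1 hKmK
  have hKpos : (0:ℝ) < K := lt_of_lt_of_le one_pos hK1
  have hKmpos : (0:ℝ) < Km := lt_of_lt_of_le one_pos hKm1
  have hk1pos : (0:ℝ) < |(k₁:ℝ)| := lt_of_lt_of_le one_pos h1k1
  have hkK : |(k:ℝ)| ≤ K := by rw [hKdef]; exact le_max_left _ _
  have hk1Km : |(k₁:ℝ)| ≤ Km := by rw [hKm]; exact le_max_left _ _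
  have hk2Km : |(k₂:ℝ)| ≤ Km := by
    rw [hKm]; exact le_trans (le_max_left _ _) (le_max_right _ _)
  have hk3Km : |(k₃:ℝ)| ≤ Km := by
    rw [hKm]; exact le_trans (le_max_right _ _) (le_max_right _ _)
  have hk1K : |(k₁:ℝ)| ≤ K := le_trans hk1Km hKmK
  have hk2K : |(k₂:ℝ)| ≤ K := le_trans hk2Km hKmK
  have hk3K : |(k₃:ℝ)| ≤ K := le_trans hk3Km hKmK
  have hKpi : h * K ≤ π := by
    have hKle : K ≤ π / h := by
      rw [hKdef, hKm]
      exact max_le hbk (max_le hb1 (max_le hb2 hb3))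
    calc h * K ≤ h * (π / h) := by nlinarith
      _ = π := by field_simp
  -- the five arguments
  set v : ℝ := h * (k : ℝ) / 4 with hv
  set v1 : ℝ := h * (k₁ : ℝ) / 4 with hv1
  set u1 : ℝ := h * ((k₁ : ℝ) + (k₂ : ℝ)) / 4 with hu1
  set u2 : ℝ := h * ((k₂ : ℝ) + (k₃ : ℝ)) / 4 with hu2
  set u3 : ℝ := h * ((k₁ : ℝ) + (k₃ : ℝ)) / 4 with hu3
  clear_value v v1 u1 u2 u3
  have keyabs : ∀ x : ℝ, |h * x / 4| = h * |x| / 4 := by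
    intro x
    rw [abs_div, abs_mul, abs_of_pos hh0]
    norm_num
  have key : ∀ x : ℝ, |x| ≤ 2 * K → |h * x / 4| ≤ h * K / 2 ∧ |h * x / 4| ≤ π / 2 := by
    intro x hx
    rw [keyabs]
    constructor
    · nlinarith
    · nlinarith [hKpi, abs_nonneg x]
  have hvk : |v| ≤ h * K / 2 ∧ |v| ≤ π / 2 := by
    rw [hv]; exact key _ (by nlinarith [hkK])
  have hv1k : |v1| ≤ h * K / 2 ∧ |v1| ≤ π / 2 := by
    rw [hv1]; exact key _ (by nlinarith [hk1K])
  have hu1k : |u1| ≤ h * K / 2 ∧ |u1| ≤ π / 2 := by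
    rw [hu1]; exact key _ (by nlinarith [abs_add_le ((k₁:ℝ)) ((k₂:ℝ)), hk1K, hk2K])
  have hu2k : |u2| ≤ h * K / 2 ∧ |u2| ≤ π / 2 := by
    rw [hu2]; exact key _ (by nlinarith [abs_add_le ((k₂:ℝ)) ((k₃:ℝ)), hk2K, hk3K])
  have hu3k : |u3| ≤ h * K / 2 ∧ |u3| ≤ π / 2 := by
    rw [hu3]; exact key _ (by nlinarith [abs_add_le ((k₁:ℝ)) ((k₃:ℝ)), hk1K, hk3K])
  have hcast12 : ((k₁:ℝ) + (k₂:ℝ)) ≠ 0 := by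
    have : (((k₁ + k₂ : ℤ)):ℝ) ≠ 0 := Int.cast_ne_zero.mpr hs12
    push_cast at this; exact this
  have hcast23 : ((k₂:ℝ) + (k₃:ℝ)) ≠ 0 := by
    have : (((k₂ + k₃ : ℤ)):ℝ) ≠ 0 := Int.cast_ne_zero.mpr hs23
    push_cast at this; exact this
  have hcast13 : ((k₁:ℝ) + (k₃:ℝ)) ≠ 0 := by
    have : (((k₁ + k₃ : ℤ)):ℝ) ≠ 0 := Int.cast_ne_zero.mpr hs13
    push_cast at this; exact this
  have hcastk : ((k:ℝ)) ≠ 0 := Int.cast_ne_zero.mpr hk0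
  have hcastk1 : ((k₁:ℝ)) ≠ 0 := Int.cast_ne_zero.mpr hk1
  have hvne : v ≠ 0 := by
    rw [hv]; exact div_ne_zero (mul_ne_zero hh0.ne' hcastk) (by norm_num)
  have hv1ne : v1 ≠ 0 := by
    rw [hv1]; exact div_ne_zero (mul_ne_zero hh0.ne' hcastk1) (by norm_num)
  have hu1ne : u1 ≠ 0 := by
    rw [hu1]; exact div_ne_zero (mul_ne_zero hh0.ne' hcast12) (by norm_num)
  have hu2ne : u2 ≠ 0 := by
    rw [hu2]; exact div_ne_zero (mul_ne_zero hh0.ne' hcast23) (by norm_num)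
  have hu3ne : u3 ≠ 0 := by
    rw [hu3]; exact div_ne_zero (mul_ne_zero hh0.ne' hcast13) (by norm_num)
  have hsv1 : Real.sin v1 ≠ 0 := sin_ne_zero' hv1ne hv1k.2
  have hsu1 : Real.sin u1 ≠ 0 := sin_ne_zero' hu1ne hu1k.2
  have hsu2 : Real.sin u2 ≠ 0 := sin_ne_zero' hu2ne hu2k.2
  have hsu3 : Real.sin u3 ≠ 0 := sin_ne_zero' hu3ne hu3k.2
  -- d and factor bounds
  set d : ℝ := (h * K / 2) ^ 2 with hd
  clear_value d
  have hd0 : (0:ℝ) ≤ d := by rw [hd]; positivity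
  have hd52 : d ≤ 5 / 2 := by
    rw [hd]
    nlinarith [Real.pi_lt_d2, hKpi, hπ, mul_pos hh0 hKpos]
  have sqle : ∀ x : ℝ, |x| ≤ h * K / 2 → x ^ 2 ≤ d := by
    intro x hx
    rw [hd, ← sq_abs x]
    gcongr
  have c1 : |(Real.sin v / v) ^ 2 - 1| ≤ d := le_trans (sinc_sq hvne hvk.2) (sqle v hvk.1)
  have c2 : |Real.cos v - 1| ≤ d := le_trans (cos_near v) (sqle v hvk.1)
  have c3 : |Real.cos u2 - 1| ≤ d := le_trans (cos_near u2) (sqle u2 hu2k.1)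
  have c4 : |v1 / Real.sin v1 - 1| ≤ d := le_trans (inv_sinc hv1ne hv1k.2) (sqle v1 hv1k.1)
  have c5 : |u1 / Real.sin u1 - 1| ≤ d := le_trans (inv_sinc hu1ne hu1k.2) (sqle u1 hu1k.1)
  have c6 : |u2 / Real.sin u2 - 1| ≤ d := le_trans (inv_sinc hu2ne hu2k.2) (sqle u2 hu2k.1)
  have c7 : |u3 / Real.sin u3 - 1| ≤ d := le_trans (inv_sinc hu3ne hu3k.2) (sqle u3 hu3k.1)
  -- the product F
  set F : ℝ := (Real.sin v / v) ^ 2 * Real.cos v * Real.cos v * Real.cos v * Real.cos u2 *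
    (v1 / Real.sin v1) * (u1 / Real.sin u1) * (u2 / Real.sin u2) * (u3 / Real.sin u3) with hF
  clear_value F
  have g1 : |(Real.sin v / v) ^ 2 * Real.cos v - 1| ≤ 9/2 * d := by
    have := mul_near_one c1 c2 hd52; linarith
  have g2 : |(Real.sin v / v) ^ 2 * Real.cos v * Real.cos v - 1| ≤ 81/4 * d := by
    have := mul_near_one g1 c2 hd52; linarith
  have g3 : |(Real.sin v / v) ^ 2 * Real.cos v * Real.cos v * Real.cos v - 1| ≤ 729/8 * d := by
    have := mul_near_one g2 c2 hd52; linarith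
  have g4 : |(Real.sin v / v) ^ 2 * Real.cos v * Real.cos v * Real.cos v * Real.cos u2 - 1|
      ≤ 6561/16 * d := by
    have := mul_near_one g3 c3 hd52; linarith
  have g5 : |(Real.sin v / v) ^ 2 * Real.cos v * Real.cos v * Real.cos v * Real.cos u2 *
      (v1 / Real.sin v1) - 1| ≤ 59049/32 * d := by
    have := mul_near_one g4 c4 hd52; linarith
  have g6 : |(Real.sin v / v) ^ 2 * Real.cos v * Real.cos v * Real.cos v * Real.cos u2 *
      (v1 / Real.sin v1) * (u1 / Real.sin u1) - 1| ≤ 531441/64 * d := by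
    have := mul_near_one g5 c5 hd52; linarith
  have g7 : |(Real.sin v / v) ^ 2 * Real.cos v * Real.cos v * Real.cos v * Real.cos u2 *
      (v1 / Real.sin v1) * (u1 / Real.sin u1) * (u2 / Real.sin u2) - 1| ≤ 4782969/128 * d := by
    have := mul_near_one g6 c6 hd52; linarith
  have hF1 : |F - 1| ≤ 43046721/256 * d := by
    rw [hF]
    have := mul_near_one g7 c7 hd52; linarith
  have hFb : |F| ≤ 10 ^ 6 := by
    have h1 := abs_add_le (F - 1) 1
    simp only [sub_add_cancel, abs_one] at h1
    linarith
  -- maximum of pairwise sums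
  set M : ℝ := max |(k₁:ℝ) + (k₂:ℝ)| (max |(k₂:ℝ) + (k₃:ℝ)| |(k₁:ℝ) + (k₃:ℝ)|) with hM
  have hM12 : |(k₁:ℝ) + (k₂:ℝ)| ≤ M := by rw [hM]; exact le_max_left _ _
  have hM23 : |(k₂:ℝ) + (k₃:ℝ)| ≤ M := by
    rw [hM]; exact le_trans (le_max_left _ _) (le_max_right _ _)
  have hM13 : |(k₁:ℝ) + (k₃:ℝ)| ≤ M := by
    rw [hM]; exact le_trans (le_max_right _ _) (le_max_right _ _)
  clear_value M
  have e12 : (1:ℝ) ≤ |(k₁:ℝ) + (k₂:ℝ)| := by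
    have := habs _ hs12; push_cast at this; exact this
  have e23 : (1:ℝ) ≤ |(k₂:ℝ) + (k₃:ℝ)| := by
    have := habs _ hs23; push_cast at this; exact this
  have e13 : (1:ℝ) ≤ |(k₁:ℝ) + (k₃:ℝ)| := by
    have := habs _ hs13; push_cast at this; exact this
  have hMpos : (0:ℝ) < M := lt_of_lt_of_le one_pos (le_trans e12 hM12)
  have h2k : 2 * (k:ℝ) = ((k₁:ℝ) + (k₂:ℝ)) + ((k₂:ℝ) + (k₃:ℝ)) + ((k₁:ℝ) + (k₃:ℝ)) := by
    rw [hsum']; ring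
  have habs2k : 2 * |(k:ℝ)| ≤ 3 * M := by
    have h5 := abs_add_three ((k₁:ℝ) + (k₂:ℝ)) ((k₂:ℝ) + (k₃:ℝ)) ((k₁:ℝ) + (k₃:ℝ))
    rw [← h2k, abs_mul] at h5
    have h6 : |(2:ℝ)| = 2 := by norm_num
    rw [h6] at h5
    linarith only [h5, hM12, hM23, hM13]
  have hkM : |(k:ℝ)| ≤ 5/2 * M := by linarith only [habs2k, hMpos]
  have hsub : ∀ x y : ℝ, |x - y| ≤ |x| + |y| := fun x y => abs_sub x y
  have hk1M : |(k₁:ℝ)| ≤ 5/2 * M := by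
    have e : (k₁:ℝ) = (k:ℝ) - ((k₂:ℝ) + (k₃:ℝ)) := by rw [hsum']; ring
    have h6 : |(k₁:ℝ)| ≤ |(k:ℝ)| + |(k₂:ℝ) + (k₃:ℝ)| := by rw [e]; exact hsub _ _
    linarith only [h6, habs2k, hM23]
  have hk2M : |(k₂:ℝ)| ≤ 5/2 * M := by
    have e : (k₂:ℝ) = (k:ℝ) - ((k₁:ℝ) + (k₃:ℝ)) := by rw [hsum']; ring
    have h6 : |(k₂:ℝ)| ≤ |(k:ℝ)| + |(k₁:ℝ) + (k₃:ℝ)| := by rw [e]; exact hsub _ _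
    linarith only [h6, habs2k, hM13]
  have hk3M : |(k₃:ℝ)| ≤ 5/2 * M := by
    have e : (k₃:ℝ) = (k:ℝ) - ((k₁:ℝ) + (k₂:ℝ)) := by rw [hsum']; ring
    have h6 : |(k₃:ℝ)| ≤ |(k:ℝ)| + |(k₁:ℝ) + (k₂:ℝ)| := by rw [e]; exact hsub _ _
    linarith only [h6, habs2k, hM12]
  have hKM : K ≤ 5/2 * M := by
    rw [hKdef, hKm]
    exact max_le hkM (max_le hk1M (max_le hk2M hk3M))
  have hu1abs : |u1| = h * |(k₁:ℝ) + (k₂:ℝ)| / 4 := by rw [hu1]; exact keyabs _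
  have hu2abs : |u2| = h * |(k₂:ℝ) + (k₃:ℝ)| / 4 := by rw [hu2]; exact keyabs _
  have hu3abs : |u3| = h * |(k₁:ℝ) + (k₃:ℝ)| / 4 := by rw [hu3]; exact keyabs _
  have habc : M ≤ |(k₁:ℝ) + (k₂:ℝ)| * |(k₂:ℝ) + (k₃:ℝ)| * |(k₁:ℝ) + (k₃:ℝ)| := by
    rw [hM]
    refine max_le ?_ (max_le ?_ ?_)
    · exact le_mul_mul (abs_nonneg _) e23 e13
    · calc |(k₂:ℝ) + (k₃:ℝ)| ≤ |(k₂:ℝ) + (k₃:ℝ)| * |(k₁:ℝ) + (k₂:ℝ)| * |(k₁:ℝ) + (k₃:ℝ)| :=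
            le_mul_mul (abs_nonneg _) e12 e13
        _ = |(k₁:ℝ) + (k₂:ℝ)| * |(k₂:ℝ) + (k₃:ℝ)| * |(k₁:ℝ) + (k₃:ℝ)| := by ring
    · calc |(k₁:ℝ) + (k₃:ℝ)| ≤ |(k₁:ℝ) + (k₃:ℝ)| * |(k₁:ℝ) + (k₂:ℝ)| * |(k₂:ℝ) + (k₃:ℝ)| :=
            le_mul_mul (abs_nonneg _) e12 e23
        _ = |(k₁:ℝ) + (k₂:ℝ)| * |(k₂:ℝ) + (k₃:ℝ)| * |(k₁:ℝ) + (k₃:ℝ)| := by ring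
  have hXlb : h^3 * K / 160 ≤ |u1| * |u2| * |u3| := by
    rw [hu1abs, hu2abs, hu3abs]
    have l0 : 2/5 * K ≤ M := by linarith only [hKM]
    have l1 : h^3/64 * (2/5 * K) ≤ h^3/64 * M :=
      mul_le_mul_of_nonneg_left l0 (by positivity)
    have l2 : h^3/64 * M ≤ h^3/64 *
        (|(k₁:ℝ) + (k₂:ℝ)| * |(k₂:ℝ) + (k₃:ℝ)| * |(k₁:ℝ) + (k₃:ℝ)|) :=
      mul_le_mul_of_nonneg_left habc (by positivity)
    calc h^3 * K / 160 = h^3/64 * (2/5 * K) := by ring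
      _ ≤ h^3/64 * M := l1
      _ ≤ h^3/64 * (|(k₁:ℝ) + (k₂:ℝ)| * |(k₂:ℝ) + (k₃:ℝ)| * |(k₁:ℝ) + (k₃:ℝ)|) := l2
      _ = h * |(k₁:ℝ) + (k₂:ℝ)| / 4 * (h * |(k₂:ℝ) + (k₃:ℝ)| / 4) *
          (h * |(k₁:ℝ) + (k₃:ℝ)| / 4) := by ring
  -- P and Q
  set P : ℝ := Psi3 k₁ k₂ k₃ with hP
  set Q : ℝ := Phi3 h k₁ k₂ k₃ with hQ
  clear_value P Q
  have h83 : (0:ℝ) < 8 / h^3 := by positivity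
  have hPval : P = -(8/h^3) * (u1 * u2 * u3) := by
    rw [hP, hu1, hu2, hu3]
    simp only [Psi3]
    push_cast
    field_simp
    ring
  have hQval : Q = -(8/h^3) * (Real.sin u1 * Real.sin u2 * Real.sin u3) := by
    rw [hQ]
    simp only [Phi3]
    rw [← hu1, ← hu2, ← hu3]
  have hPabs : |P| = 8/h^3 * (|u1| * |u2| * |u3|) := by
    rw [hPval, abs_mul, abs_neg, abs_mul, abs_mul, abs_of_pos h83]
  have hPlb : K/20 ≤ |P| := by
    rw [hPabs]
    calc K/20 = 8/h^3 * (h^3 * K / 160) := by field_simp; ring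
      _ ≤ 8/h^3 * (|u1| * |u2| * |u3|) := mul_le_mul_of_nonneg_left hXlb h83.le
  have hPpos : (0:ℝ) < |P| := lt_of_lt_of_le (by positivity) hPlb
  have hPne : P ≠ 0 := by
    intro hz; rw [hz] at hPpos; simp at hPpos
  -- |P - Q|
  have hprod : |u1 * u2 * u3 - Real.sin u1 * Real.sin u2 * Real.sin u3|
      ≤ (|u1| * |u2| * |u3|) * (u1^2 + u2^2 + u3^2) / 6 := by
    have e : u1 * u2 * u3 - Real.sin u1 * Real.sin u2 * Real.sin u3
        = (u1 - Real.sin u1) * u2 * u3 + Real.sin u1 * (u2 - Real.sin u2) * u3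
          + Real.sin u1 * Real.sin u2 * (u3 - Real.sin u3) := by ring
    have b1 : |u1 - Real.sin u1| ≤ |u1|^3/6 := by rw [abs_sub_comm]; exact abs_sin_sub_le' u1
    have b2 : |u2 - Real.sin u2| ≤ |u2|^3/6 := by rw [abs_sub_comm]; exact abs_sin_sub_le' u2
    have b3 : |u3 - Real.sin u3| ≤ |u3|^3/6 := by rw [abs_sub_comm]; exact abs_sin_sub_le' u3
    have s1 : |Real.sin u1| ≤ |u1| := Real.abs_sin_le_abs
    have s2 : |Real.sin u2| ≤ |u2| := Real.abs_sin_le_abs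
    have s3 : |Real.sin u3| ≤ |u3| := Real.abs_sin_le_abs
    have t1 : |(u1 - Real.sin u1) * u2 * u3| ≤ |u1| * |u2| * |u3| * u1^2 / 6 := by
      rw [abs_mul, abs_mul]
      calc |u1 - Real.sin u1| * |u2| * |u3| ≤ |u1|^3/6 * |u2| * |u3| := by
            gcongr
        _ = |u1| * |u2| * |u3| * u1^2 / 6 := by rw [← sq_abs u1]; ring
    have t2 : |Real.sin u1 * (u2 - Real.sin u2) * u3| ≤ |u1| * |u2| * |u3| * u2^2 / 6 := by
      rw [abs_mul, abs_mul]
      calc |Real.sin u1| * |u2 - Real.sin u2| * |u3| ≤ |u1| * (|u2|^3/6) * |u3| := by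
            gcongr
        _ = |u1| * |u2| * |u3| * u2^2 / 6 := by rw [← sq_abs u2]; ring
    have t3 : |Real.sin u1 * Real.sin u2 * (u3 - Real.sin u3)|
        ≤ |u1| * |u2| * |u3| * u3^2 / 6 := by
      rw [abs_mul, abs_mul]
      calc |Real.sin u1| * |Real.sin u2| * |u3 - Real.sin u3|
          ≤ |u1| * |u2| * (|u3|^3/6) := by gcongr
        _ = |u1| * |u2| * |u3| * u3^2 / 6 := by rw [← sq_abs u3]; ring
    calc |u1 * u2 * u3 - Real.sin u1 * Real.sin u2 * Real.sin u3|
        = |(u1 - Real.sin u1) * u2 * u3 + Real.sin u1 * (u2 - Real.sin u2) * u3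
            + Real.sin u1 * Real.sin u2 * (u3 - Real.sin u3)| := by rw [e]
      _ ≤ |(u1 - Real.sin u1) * u2 * u3| + |Real.sin u1 * (u2 - Real.sin u2) * u3|
            + |Real.sin u1 * Real.sin u2 * (u3 - Real.sin u3)| := abs_add_three _ _ _
      _ ≤ |u1| * |u2| * |u3| * (u1^2 + u2^2 + u3^2) / 6 := by linarith only [t1, t2, t3]
  have hPQ : |P - Q| ≤ |P| * d / 2 := by
    have e : P - Q = -(8/h^3) * (u1 * u2 * u3 - Real.sin u1 * Real.sin u2 * Real.sin u3) := by
      rw [hPval, hQval]; ring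
    have hu1d : u1^2 ≤ d := sqle u1 hu1k.1
    have hu2d : u2^2 ≤ d := sqle u2 hu2k.1
    have hu3d : u3^2 ≤ d := sqle u3 hu3k.1
    rw [e, abs_mul, abs_neg, abs_of_pos h83]
    calc 8/h^3 * |u1 * u2 * u3 - Real.sin u1 * Real.sin u2 * Real.sin u3|
        ≤ 8/h^3 * ((|u1| * |u2| * |u3|) * (u1^2 + u2^2 + u3^2) / 6) :=
          mul_le_mul_of_nonneg_left hprod h83.le
      _ ≤ 8/h^3 * ((|u1| * |u2| * |u3|) * (3 * d) / 6) := by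
          gcongr
          linarith only [hu1d, hu2d, hu3d]
      _ = (8/h^3 * (|u1| * |u2| * |u3|)) * d / 2 := by ring
      _ = |P| * d / 2 := by rw [hPabs]
  -- the multipliers
  set m₁ : ℝ := 2 / ((k₁:ℝ) * P) with hm1
  set m₂ : ℝ := 2 * Real.sin (h * (k:ℝ) / 2) ^ 2 * Real.cos v * Real.cos u2 /
      (h * (k:ℝ)^2 * Real.sin v1 * Q) with hm2
  clear_value m₁ m₂
  have habs2 : |(2:ℝ)| = 2 := by norm_num
  have hm1abs : |m₁| ≤ 40 / (|(k₁:ℝ)| * K) := by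
    rw [hm1, abs_div, abs_mul, habs2, div_le_div_iff₀ (by positivity) (by positivity)]
    have hint := mul_le_mul_of_nonneg_left hPlb (abs_nonneg ((k₁:ℝ)))
    linarith only [hint]
  have hm1P : |m₁| * |P| = 2 / |(k₁:ℝ)| := by
    rw [hm1, abs_div, abs_mul, habs2]
    field_simp
  have hm2F : m₂ = m₁ * F := by
    rw [hm2, hm1, hF, hPval, hQval]
    have hsin2 : Real.sin (h * (k:ℝ) / 2) = 2 * Real.sin v * Real.cos v := by
      rw [hv, ← Real.sin_two_mul]
      congr 1
      ring
    have hkv : (k:ℝ) = 4 * v / h := by rw [hv]; field_simp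
    have hk1v : (k₁:ℝ) = 4 * v1 / h := by rw [hv1]; field_simp
    rw [hsin2, hkv, hk1v]
    field_simp [hvne, hv1ne, hu1ne, hu2ne, hu3ne, hsv1, hsu1, hsu2, hsu3]
    ring
  -- assembling the two bounds
  have habsσ : |σ| = 1 := by rcases hσ with rfl | rfl <;> norm_num
  have hPQt : |σ * t * P - σ * t * Q| = |t| * |P - Q| := by
    have e : σ * t * P - σ * t * Q = σ * (t * (P - Q)) := by ring
    rw [e, abs_mul, abs_mul, habsσ, one_mul]
  have hDpos : (0:ℝ) < |(k₁:ℝ)| * Km := by positivity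
  have bound0 : ‖((m₁:ℝ):ℂ) * eI (σ * t * P) - ((m₂:ℝ):ℂ) * eI (σ * t * Q)‖
      ≤ 10^8 / (|(k₁:ℝ)| * Km) := by
    refine le_trans (norm_comb0 m₁ m₂ _ _) ?_
    have h2 : |m₂| ≤ |m₁| * 10^6 := by
      rw [hm2F, abs_mul]
      exact mul_le_mul_of_nonneg_left hFb (abs_nonneg _)
    have h3 : |m₁| ≤ 40 / (|(k₁:ℝ)| * Km) := by
      refine le_trans hm1abs ?_
      gcongr
    have h4 : |m₁| * 10^6 ≤ 40 / (|(k₁:ℝ)| * Km) * 10^6 :=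
      mul_le_mul_of_nonneg_right h3 (by norm_num)
    have h5 : 40 / (|(k₁:ℝ)| * Km) + 40 / (|(k₁:ℝ)| * Km) * 10^6
        = (40 + 40 * 10^6) / (|(k₁:ℝ)| * Km) := by ring
    have h6 : (40 + 40 * 10^6 : ℝ) / (|(k₁:ℝ)| * Km) ≤ 10^8 / (|(k₁:ℝ)| * Km) := by
      gcongr
      norm_num
    linarith only [h2, h3, h4, h5, h6]
  have hE1 : h * Km ≤ 4 := by
    have l1 : h * Km ≤ h * K := mul_le_mul_of_nonneg_left hKmK hh0.le
    linarith only [l1, hKpi, Real.pi_le_four]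
  have bound1 : ‖((m₁:ℝ):ℂ) * eI (σ * t * P) - ((m₂:ℝ):ℂ) * eI (σ * t * Q)‖
      ≤ 10^8 * (h * (1 + |t|) * K^2) / (|(k₁:ℝ)| * Km) := by
    refine le_trans (norm_comb m₁ m₂ _ _) ?_
    rw [hPQt]
    have hT1 : |m₁ - m₂| ≤ 5 * 10^7 * (h * (1 + |t|) * K^2) / (|(k₁:ℝ)| * Km) := by
      have e1 : |m₁ - m₂| = |m₁| * |F - 1| := by
        have e0 : m₁ - m₂ = m₁ * (1 - F) := by rw [hm2F]; ring
        rw [e0, abs_mul, abs_sub_comm 1 F]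
      rw [e1]
      have e2 : |m₁| * |F - 1| ≤ 40 / (|(k₁:ℝ)| * K) * (43046721/256 * d) :=
        mul_le_mul hm1abs hF1 (abs_nonneg _) (by positivity)
      refine le_trans e2 ?_
      rw [hd, div_mul_eq_mul_div, div_le_div_iff₀ (by positivity) hDpos]
      calc 40 * (43046721/256 * (h * K / 2)^2) * (|(k₁:ℝ)| * Km)
          = 215233605/128 * (h * h) * (K^2 * |(k₁:ℝ)| * Km) := by ring
        _ ≤ 215233605/128 * (h * 1) * (K^2 * |(k₁:ℝ)| * K) := by
            gcongr
        _ ≤ 5 * 10^7 * (h * 1) * (K^2 * |(k₁:ℝ)| * K) := by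
            gcongr
            norm_num
        _ ≤ 5 * 10^7 * (h * (1 + |t|)) * (K^2 * |(k₁:ℝ)| * K) := by
            gcongr
            linarith only [abs_nonneg t]
        _ = 5 * 10^7 * (h * (1 + |t|) * K^2) * (|(k₁:ℝ)| * K) := by ring
    have hT2 : |m₁| * (|t| * |P - Q|) ≤ (h * (1 + |t|) * K^2) / (|(k₁:ℝ)| * Km) := by
      have e3 : |m₁| * (|t| * |P - Q|) ≤ |m₁| * (|t| * (|P| * d / 2)) := by
        gcongr
      have e4 : |m₁| * (|t| * (|P| * d / 2)) = |m₁| * |P| * (|t| * d / 2) := by ring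
      have e5 : |m₁| * |P| * (|t| * d / 2) = 2 / |(k₁:ℝ)| * (|t| * d / 2) := by rw [hm1P]
      have e6 : 2 / |(k₁:ℝ)| * (|t| * d / 2) = |t| * d / |(k₁:ℝ)| := by
        field_simp
      have e7 : |t| * d / |(k₁:ℝ)| ≤ (h * (1 + |t|) * K^2) / (|(k₁:ℝ)| * Km) := by
        rw [hd, div_le_div_iff₀ (by positivity) hDpos]
        calc |t| * (h * K / 2)^2 * (|(k₁:ℝ)| * Km)
            = (|t| * (h * Km)) * (h * K^2 * |(k₁:ℝ)|) / 4 := by ring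
          _ ≤ (|t| * 4) * (h * K^2 * |(k₁:ℝ)|) / 4 := by
              gcongr
          _ = |t| * (h * K^2 * |(k₁:ℝ)|) := by ring
          _ ≤ (1 + |t|) * (h * K^2 * |(k₁:ℝ)|) := by
              gcongr
              linarith only []
          _ = h * (1 + |t|) * K^2 * |(k₁:ℝ)| := by ring
      calc |m₁| * (|t| * |P - Q|) ≤ |m₁| * (|t| * (|P| * d / 2)) := e3
        _ = 2 / |(k₁:ℝ)| * (|t| * d / 2) := by rw [e4, e5]
        _ = |t| * d / |(k₁:ℝ)| := e6
        _ ≤ (h * (1 + |t|) * K^2) / (|(k₁:ℝ)| * Km) := e7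
    have hsum2 : 5 * 10^7 * (h * (1 + |t|) * K^2) / (|(k₁:ℝ)| * Km)
        + (h * (1 + |t|) * K^2) / (|(k₁:ℝ)| * Km)
        ≤ 10^8 * (h * (1 + |t|) * K^2) / (|(k₁:ℝ)| * Km) := by
      rw [← add_div]
      have hre : 5 * 10^7 * (h * (1 + |t|) * K^2) + h * (1 + |t|) * K^2
          = (5 * 10^7 + 1) * (h * (1 + |t|) * K^2) := by ring
      rw [hre]
      gcongr
      norm_num
    linarith only [hT1, hT2, hsum2]
  -- interpolation
  have final := interp_bound (norm_nonneg _) bound0 bound1 hα0 hα1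
  refine le_trans final (le_of_eq ?_)
  have hc : (0:ℝ) < 10^8 := by norm_num
  have hEpos : (0:ℝ) < h * (1 + |t|) * K^2 := by positivity
  rw [Real.div_rpow (by norm_num) hDpos.le,
      Real.div_rpow (by positivity) hDpos.le, div_mul_div_comm,
      ← Real.rpow_add hDpos, Real.mul_rpow hc.le hEpos.le,
      Real.mul_rpow (by positivity : (0:ℝ) ≤ h * (1 + |t|)) (by positivity : (0:ℝ) ≤ K^2),
      Real.mul_rpow hh0.le (by positivity : (0:ℝ) ≤ 1 + |t|),
      ← Real.rpow_natCast K 2, ← Real.rpow_mul hKpos.le]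
  have hee : (1 - α) + α = 1 := by ring
  rw [hee, Real.rpow_one]
  have hca : ((10:ℝ)^8) ^ (1 - α) * (((10:ℝ)^8) ^ α) = 10^8 := by
    rw [← Real.rpow_add hc, hee, Real.rpow_one]
  have h2a : ((2:ℕ):ℝ) * α = 2 * α := by norm_num
  rw [h2a]
  field_simp
  linear_combination hca

end FPU

end
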